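/- Let V be a finite-dimensional vector space with dim V = n, and let T be a set of linear automorphisms of V. Then there exist at most 2^{n²} elements g₁, …, g_N ∈ T (with N ≤ 2^{n²}) such that every linear subspace of V invariant under all of g₁, …, g_N is invariant under every element of T. -/

import Mathlib

open Module

private noncomputable def stmt3A (F : Type*) {V : Type*} [Field F] [AddCommGroup V] [Module F V]
    (S : Finset (V ≃ₗ[F] V)) : Subalgebra F (Module.End F V) :=
  Algebra.adjoin F ((fun g : V ≃ₗ[F] V => (g.toLinearMap : Module.End F V)) '' S ∪
    (fun g : V ≃ₗ[F] V => ((g⁻¹).toLinearMap : Module.End F V)) '' S)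

private lemma stmt3A_mono {F V : Type*} [Field F] [AddCommGroup V] [Module F V]
    {S S' : Finset (V ≃ₗ[F] V)} (h : S ⊆ S') : stmt3A F S ≤ stmt3A F S' := by
  apply Algebra.adjoin_mono
  apply Set.union_subset_union <;> exact Set.image_mono (by exact_mod_cast h)

private lemma stmt3_aux {F V : Type*} [Field F] [AddCommGroup V] [Module F V]
    [FiniteDimensional F V] (T : Set (V ≃ₗ[F] V)) :
    ∀ k : ℕ, ∀ S : Finset (V ≃ₗ[F] V), ↑S ⊆ T →
      Module.finrank F (Module.End F V) ≤
        k + Module.finrank F (Subalgebra.toSubmodule (stmt3A F S)) →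
      ∃ S' : Finset (V ≃ₗ[F] V), ↑S' ⊆ T ∧ S'.card ≤ S.card + k ∧
        ∀ h ∈ T, (h.toLinearMap ∈ stmt3A F S' ∧ (h⁻¹).toLinearMap ∈ stmt3A F S') := by
  classical
  intro k
  induction k with
  | zero =>
    intro S hST hrk
    refine ⟨S, hST, le_rfl.trans (Nat.le_add_right _ 0), ?_⟩
    have htop : Subalgebra.toSubmodule (stmt3A F S) = ⊤ :=
      Submodule.eq_top_of_finrank_eq (le_antisymm (Submodule.finrank_le _) (by simpa using hrk))
    intro h _
    constructor <;>
    · show _ ∈ Subalgebra.toSubmodule (stmt3A F S)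
      rw [htop]; trivial
  | succ k ih =>
    intro S hST hrk
    by_cases hex : ∃ h ∈ T, h.toLinearMap ∉ stmt3A F S ∨ (h⁻¹).toLinearMap ∉ stmt3A F S
    · obtain ⟨h, hhT, hh⟩ := hex
      set S₂ := insert h S with hS₂
      have hmem1 : h.toLinearMap ∈ stmt3A F S₂ :=
        Algebra.subset_adjoin (Set.mem_union_left _ ⟨h, by simp [hS₂], rfl⟩)
      have hmem2 : (h⁻¹).toLinearMap ∈ stmt3A F S₂ :=
        Algebra.subset_adjoin (Set.mem_union_right _ ⟨h, by simp [hS₂], rfl⟩)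
      have hlt : stmt3A F S < stmt3A F S₂ := by
        refine lt_of_le_of_ne (stmt3A_mono (Finset.subset_insert _ _)) ?_
        intro heq
        rcases hh with hh | hh
        · exact hh (heq ▸ hmem1)
        · exact hh (heq ▸ hmem2)
      have hrk2 : Module.finrank F (Subalgebra.toSubmodule (stmt3A F S)) <
          Module.finrank F (Subalgebra.toSubmodule (stmt3A F S₂)) :=
        Submodule.finrank_lt_finrank_of_lt (by exact_mod_cast hlt)
      obtain ⟨S', hS'T, hcard, hclose⟩ := ih S₂
        (by rw [hS₂]; push_cast; exact Set.insert_subset hhT hST)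
        (by omega)
      refine ⟨S', hS'T, ?_, hclose⟩
      have : S₂.card ≤ S.card + 1 := Finset.card_insert_le _ _
      omega
    · push_neg at hex
      exact ⟨S, hST, le_rfl.trans (Nat.le_add_right _ _), fun h hT => hex h hT⟩

theorem stmt_3 (F : Type*) [Field F] (V : Type*) [AddCommGroup V] [Module F V]
    [FiniteDimensional F V] (n : ℕ) (hn : n = Module.finrank F V)
    (T : Set (V ≃ₗ[F] V)) :
    ∃ S : Finset (V ≃ₗ[F] V), ↑S ⊆ T ∧ S.card ≤ 2 ^ (n ^ 2) ∧
      ∀ W : Submodule F V,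
        (∀ g ∈ S, W.map (g : V →ₗ[F] V) = W) →
        ∀ g ∈ T, W.map (g : V →ₗ[F] V) = W := by
  have hEnd : Module.finrank F (Module.End F V) = n ^ 2 := by
    rw [hn, sq]; exact Module.finrank_linearMap (R := F) (S := F) (M := V) (N := V)
  obtain ⟨S, hST, hcard, hclose⟩ := stmt3_aux T (n ^ 2) ∅ (by simp)
    (by rw [hEnd]; exact Nat.le_add_right _ _)
  refine ⟨S, hST, ?_, ?_⟩
  · calc S.card ≤ 0 + n ^ 2 := by simpa using hcard
      _ ≤ 2 ^ (n ^ 2) := by simpa using Nat.le_of_lt (Nat.lt_two_pow_self (n := n ^ 2))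
  · intro W hW
    -- W is stable under every element of the adjoined algebra
    have key : ∀ x ∈ stmt3A F S, ∀ w ∈ W, x w ∈ W := by
      intro x hx
      induction hx using Algebra.adjoin_induction with
      | mem y hy =>
        rcases hy with ⟨g, hg, rfl⟩ | ⟨g, hg, rfl⟩
        · intro w hw
          have : g w ∈ W.map (g : V →ₗ[F] V) := ⟨w, hw, rfl⟩
          rwa [hW g (by exact_mod_cast hg)] at this
        · intro w hw
          have hw' : w ∈ W.map (g : V →ₗ[F] V) := by
            rw [hW g (by exact_mod_cast hg)]; exact hw
          obtain ⟨u, hu, hgu⟩ := hw'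
          have : (g⁻¹ : V ≃ₗ[F] V) w = u := by rw [← hgu]; exact g.symm_apply_apply u
          show (g⁻¹ : V ≃ₗ[F] V) w ∈ W
          rw [this]; exact hu
      | algebraMap r => intro w hw; simpa using W.smul_mem r hw
      | add a b _ _ ha hb => intro w hw; simpa using W.add_mem (ha w hw) (hb w hw)
      | mul a b _ _ ha hb => intro w hw; exact ha _ (hb w hw)
    intro g hgT
    obtain ⟨hg1, hg2⟩ := hclose g hgT
    apply le_antisymm
    · rintro _ ⟨w, hw, rfl⟩
      exact key _ hg1 w hw
    · intro w hw
      refine ⟨g⁻¹ w, key _ hg2 w hw, ?_⟩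
      show g (g⁻¹ w) = w
      exact g.apply_symm_apply w
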